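/- arXiv:1307.2375 — 3 statements merged into one kernel-verified Lean document; each statement's English description precedes it below -/
import Mathlib

section
/- Let 𝔤 be a real semisimple Lie algebra with Cartan decomposition 𝔤 = 𝔨 ⊕ 𝔰 determined by a Cartan involution θ, and let 𝔤ₙ be the maximal noncompact ideal of 𝔤 (the ideal generated by 𝔰). If 𝔥 ⊆ 𝔤 is a θ-stable Lie subalgebra with 𝔤 = 𝔥 + 𝔨, then 𝔤ₙ ⊆ 𝔥. -/
/-- Let `𝔤` be a real semisimple Lie algebra with Cartan involution `θ` and Cartan
decomposition `𝔤 = 𝔨 ⊕ 𝔰`, and let `𝔤ₙ` be the ideal generated by `𝔰`.  If `𝔥` is a `θ`-stable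
subalgebra with `𝔤 = 𝔥 + 𝔨`, then `𝔤ₙ ⊆ 𝔥`. -/
theorem stmt1 {g : Type*} [LieRing g] [LieAlgebra ℝ g] [Module.Finite ℝ g]
    [LieAlgebra.IsSemisimple ℝ g]
    (θ : g →ₗ⁅ℝ⁆ g) (hinv : ∀ x, θ (θ x) = x)
    -- Cartan: the form `(x, y) ↦ -B(x, θ y)` is positive definite
    (hcartan : ∀ x : g, x ≠ 0 → 0 < -(killingForm ℝ g x (θ x)))
    (gn : LieIdeal ℝ g) (hgn : gn = LieSubmodule.lieSpan ℝ g {x : g | θ x = -x})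
    (h : LieSubalgebra ℝ g) (hθstable : ∀ x ∈ h, θ x ∈ h)
    (hsum : ∀ x : g, ∃ a ∈ h, ∃ b : g, θ b = b ∧ x = a + b) :
    ∀ x ∈ gn, x ∈ h := by
  set S : Set g := {x : g | θ x = -x} with hS
  have hSh : ∀ x ∈ S, x ∈ h := by
    intro x hx
    obtain ⟨a, ha, b, hb, hab⟩ := hsum x
    have hx2 : (2 : ℝ) • x = a - θ a := by
      have h1 : θ x = θ a + b := by rw [hab, map_add, hb]
      have h2 : θ x = -x := hx
      have : x - θ x = a - θ a := by rw [hab, map_add, hb]; abel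
      rw [h2] at this
      rw [two_smul]; linear_combination (norm := module) this
    have : x = (2⁻¹ : ℝ) • (a - θ a) := by
      rw [← hx2, smul_smul]; norm_num
    rw [this]
    exact h.smul_mem _ (h.sub_mem ha (hθstable a ha))
  -- the candidate ideal: span of S ∪ [S, S]
  set T : Set g := {z : g | ∃ x ∈ S, ∃ y ∈ S, z = ⁅x, y⁆} with hT
  set N : Submodule ℝ g := Submodule.span ℝ (S ∪ T) with hN
  -- bracket with a `θ`-fixed element preserves S, bracket of two S elements is in T
  have hKS : ∀ k m : g, θ k = k → m ∈ S → ⁅k, m⁆ ∈ S := by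
    intro k m hk hm
    show θ ⁅k, m⁆ = -⁅k, m⁆
    rw [LieHom.map_lie, hk, hm, lie_neg]
  have hlieK : ∀ k : g, θ k = k → ∀ m ∈ N, ⁅k, m⁆ ∈ N := by
    intro k hk m hm
    induction hm using Submodule.span_induction with
    | mem x hx =>
      rcases hx with hx | hx
      · exact Submodule.subset_span (Or.inl (hKS k x hk hx))
      · obtain ⟨s₁, hs₁, s₂, hs₂, rfl⟩ := hx
        rw [leibniz_lie]
        refine N.add_mem ?_ ?_
        · exact Submodule.subset_span (Or.inr ⟨_, hKS k s₁ hk hs₁, _, hs₂, rfl⟩)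
        · exact Submodule.subset_span (Or.inr ⟨_, hs₁, _, hKS k s₂ hk hs₂, rfl⟩)
    | zero => rw [lie_zero]; exact N.zero_mem
    | add x y _ _ ihx ihy => rw [lie_add]; exact N.add_mem ihx ihy
    | smul c x _ ihx => rw [lie_smul]; exact N.smul_mem c ihx
  have hlieS : ∀ s : g, s ∈ S → ∀ m ∈ N, ⁅s, m⁆ ∈ N := by
    intro s hs m hm
    induction hm using Submodule.span_induction with
    | mem x hx =>
      rcases hx with hx | hx
      · exact Submodule.subset_span (Or.inr ⟨_, hs, _, hx, rfl⟩)
      · obtain ⟨s₁, hs₁, s₂, hs₂, rfl⟩ := hx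
        have hss₁ : θ ⁅s, s₁⁆ = ⁅s, s₁⁆ := by
          rw [LieHom.map_lie, hs, hs₁, neg_lie, lie_neg, neg_neg]
        have hss₂ : θ ⁅s, s₂⁆ = ⁅s, s₂⁆ := by
          rw [LieHom.map_lie, hs, hs₂, neg_lie, lie_neg, neg_neg]
        rw [leibniz_lie]
        refine N.add_mem ?_ ?_
        · exact Submodule.subset_span (Or.inl (hKS _ _ hss₁ hs₂))
        · have : ⁅s₁, ⁅s, s₂⁆⁆ ∈ S := by
            show θ _ = -_
            rw [LieHom.map_lie, hs₁, hss₂, neg_lie]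
          exact Submodule.subset_span (Or.inl this)
    | zero => rw [lie_zero]; exact N.zero_mem
    | add x y _ _ ihx ihy => rw [lie_add]; exact N.add_mem ihx ihy
    | smul c x _ ihx => rw [lie_smul]; exact N.smul_mem c ihx
  -- N is a Lie ideal
  have hlie : ∀ (x m : g), m ∈ N → ⁅x, m⁆ ∈ N := by
    intro x m hm
    have hdec : x = (2⁻¹ : ℝ) • (x + θ x) + (2⁻¹ : ℝ) • (x - θ x) := by
      rw [smul_sub, smul_add]
      have : (2⁻¹ : ℝ) • x + (2⁻¹ : ℝ) • x = x := by
        rw [← two_smul ℝ, smul_smul]; norm_num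
      linear_combination (norm := module) this
    have hk : θ ((2⁻¹ : ℝ) • (x + θ x)) = (2⁻¹ : ℝ) • (x + θ x) := by
      rw [map_smul, map_add, hinv, add_comm]
    have hs : ((2⁻¹ : ℝ) • (x - θ x)) ∈ S := by
      show θ _ = -_
      rw [map_smul, map_sub, hinv, ← smul_neg, neg_sub]
    have heq : ⁅x, m⁆ = ⁅(2⁻¹ : ℝ) • (x + θ x), m⁆ + ⁅(2⁻¹ : ℝ) • (x - θ x), m⁆ := by
      rw [← add_lie, ← hdec]
    rw [heq]
    exact N.add_mem (hlieK _ hk m hm) (hlieS _ hs m hm)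
  let NI : LieIdeal ℝ g := { N with lie_mem := fun {x m} hm => hlie x m hm }
  have hgnN : gn ≤ NI := by
    rw [hgn]
    rw [LieSubmodule.lieSpan_le]
    intro x hx
    exact Submodule.subset_span (Or.inl hx)
  have hNh : ∀ x ∈ N, x ∈ h := by
    intro x hx
    have : N ≤ h.toSubmodule := by
      rw [hN, Submodule.span_le]
      rintro z (hz | ⟨s₁, hs₁, s₂, hs₂, rfl⟩)
      · exact hSh z hz
      · exact h.lie_mem (hSh _ hs₁) (hSh _ hs₂)
    exact this hx
  intro x hx
  exact hNh x (hgnN hx)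
end

section
/- If c₁ and c₂ are octonions both orthogonal to ℂ ⊂ 𝕆 (i.e., in the orthogonal complement 𝕆_I of the complex numbers embedded in the octonions) and their product c₁c₂ also lies in 𝕆_I, then c₁ and c₂ are orthogonal to each other. -/
noncomputable section

/-- The octonions, realized by the Cayley–Dickson construction on the quaternions. -/
abbrev Oct : Type := Quaternion ℝ × Quaternion ℝ

/-- Octonion multiplication (Cayley–Dickson): `(a,b)(c,d) = (ac − d̄b, da + bc̄)`. -/
def omul (x y : Oct) : Oct :=
  (x.1 * y.1 - star y.2 * x.2, y.2 * x.1 + x.2 * star y.1)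

/-- Octonion conjugation. -/
def oconj (x : Oct) : Oct := (star x.1, -x.2)

/-- Real part of an octonion. -/
def ore (x : Oct) : ℝ := x.1.re

/-- The standard inner product `⟨x, y⟩ = Re (x ȳ)` on the octonions. -/
def oinner (x y : Oct) : ℝ := ore (omul x (oconj y))

/-- The squared norm of an octonion. -/
def onormSq (x : Oct) : ℝ := oinner x x

/-- The standard embedding `ℂ = span{1, i} ⊂ 𝕆`. -/
def embC (z : ℂ) : Oct := ((⟨z.re, z.im, 0, 0⟩ : Quaternion ℝ), 0)

/-- `𝕆_I = ℂ^⊥`, the orthogonal complement of `ℂ` in the octonions. -/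
def OI : Set Oct := {x : Oct | ∀ z : ℂ, oinner x (embC z) = 0}

/-- If `c₁, c₂ ∈ 𝕆_I = ℂ^⊥` and their product `c₁c₂` also lies in `𝕆_I`, then
`c₁` and `c₂` are orthogonal to each other. -/
theorem stmt8 (c₁ c₂ : Oct) (h₁ : c₁ ∈ OI) (h₂ : c₂ ∈ OI)
    (h₁₂ : omul c₁ c₂ ∈ OI) : oinner c₁ c₂ = 0 := by
  have h2 := h₂ 1
  have h12 := h₁₂ 1
  have e : embC 1 = (1, 0) := by ext <;> rfl
  rw [e] at h2 h12
  simp only [oinner, omul, oconj, ore, embC, Complex.one_re, Complex.one_im] at *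
  simp only [Quaternion.re_sub, Quaternion.re_mul, Quaternion.re_star, Quaternion.imI_star,
    Quaternion.imJ_star, Quaternion.imK_star, Quaternion.re_neg, Quaternion.imI_neg,
    Quaternion.imJ_neg, Quaternion.imK_neg] at *
  simp [Quaternion.re_one, Quaternion.imI_one, Quaternion.imJ_one, Quaternion.imK_one, Quaternion.re_zero,
    Quaternion.imI_zero, Quaternion.imJ_zero, Quaternion.imK_zero] at h2 h12
  have h3 : c₁.1.re * c₂.1.re = 0 := by rw [h2]; ring
  linarith [h3, h12]
end
end

section
/- Every nonzero semisimple (diagonalizable over ℂ) element of i·𝔰𝔲(2,1) (Hermitian matrices with respect to the form diag(1,1,−1), trace zero) is conjugate under SU(2,1) to either a real diagonal matrix diag(α₁, α₂, −α₁−α₂) or a matrix of the form [[2α,0,0],[0,−α,γi],[0,γi,−α]] with α, γ ∈ ℝ. -/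
open Matrix Complex

noncomputable section

namespace Stmt10Aux

abbrev Jm : Matrix (Fin 3) (Fin 3) ℂ := Matrix.diagonal ![1, 1, -1]

/-- matrix with columns `c 0, c 1, c 2` -/
def cols (c : Fin 3 → Fin 3 → ℂ) : Matrix (Fin 3) (Fin 3) ℂ := Matrix.of fun i j => c j i

def Bf (u v : Fin 3 → ℂ) : ℂ :=
  (starRingEnd ℂ) (u 0) * v 0 + (starRingEnd ℂ) (u 1) * v 1 - (starRingEnd ℂ) (u 2) * v 2

def Goal (x : Matrix (Fin 3) (Fin 3) ℂ) : Prop :=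
  ∃ g : Matrix (Fin 3) (Fin 3) ℂ, g.det = 1 ∧ g.conjTranspose * Jm * g = Jm ∧
    ((∃ α₁ α₂ : ℝ, g⁻¹ * x * g = Matrix.diagonal ![(α₁ : ℂ), (α₂ : ℂ), (-α₁ - α₂ : ℂ)]) ∨
      (∃ α γ : ℝ, g⁻¹ * x * g =
        !![(2 * α : ℂ), 0, 0;
           0, (-α : ℂ), (γ : ℂ) * Complex.I;
           0, (γ : ℂ) * Complex.I, (-α : ℂ)]))

lemma Bf_eq (u v : Fin 3 → ℂ) : Bf u v = star u ⬝ᵥ (Jm *ᵥ v) := by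
  simp [Bf, dotProduct, Matrix.mulVec, Fin.sum_univ_three, Matrix.diagonal]
  ring

lemma Bf_conj (u v : Fin 3 → ℂ) : (starRingEnd ℂ) (Bf u v) = Bf v u := by
  simp [Bf]; ring

lemma Bf_smul_left (a : ℂ) (u v : Fin 3 → ℂ) : Bf (a • u) v = (starRingEnd ℂ) a * Bf u v := by
  simp [Bf]; ring

lemma Bf_smul_right (a : ℂ) (u v : Fin 3 → ℂ) : Bf u (a • v) = a * Bf u v := by
  simp [Bf]; ring

lemma Bf_smul_smul (a b : ℂ) (u v : Fin 3 → ℂ) :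
    Bf (a • u) (b • v) = (starRingEnd ℂ) a * b * Bf u v := by
  simp [Bf]; ring

lemma Bf_add_left (u w v : Fin 3 → ℂ) : Bf (u + w) v = Bf u v + Bf w v := by
  simp [Bf]; ring

lemma Bf_add_right (u v w : Fin 3 → ℂ) : Bf u (v + w) = Bf u v + Bf u w := by
  simp [Bf]; ring

lemma Bf_sub_left (u w v : Fin 3 → ℂ) : Bf (u - w) v = Bf u v - Bf w v := by
  simp [Bf]; ring

lemma Bf_sub_right (u v w : Fin 3 → ℂ) : Bf u (v - w) = Bf u v - Bf u w := by
  simp [Bf]; ring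

lemma Bf_self_real (u : Fin 3 → ℂ) : Bf u u = ((Bf u u).re : ℝ) := by
  have h := Bf_conj u u
  have := Complex.conj_eq_iff_im.mp h
  exact Complex.ext (by simp) (by simp [this])

lemma eig_smul (x : Matrix (Fin 3) (Fin 3) ℂ) (q : Fin 3 → ℂ) (β s : ℂ)
    (h : x *ᵥ q = β • q) : x *ᵥ (s • q) = β • (s • q) := by
  rw [Matrix.mulVec_smul, h, smul_comm]

lemma norm_scale_pos (ν : ℝ) (hν : 0 < ν) :
    (starRingEnd ℂ) (((Real.sqrt ν)⁻¹ : ℝ) : ℂ) * (((Real.sqrt ν)⁻¹ : ℝ) : ℂ) * (ν : ℂ) = 1 := by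
  rw [Complex.conj_ofReal]
  have hs : Real.sqrt ν ≠ 0 := by positivity
  have : ((Real.sqrt ν)⁻¹ : ℝ) * ((Real.sqrt ν)⁻¹ : ℝ) * ν = 1 := by
    rw [← Real.mul_self_sqrt hν.le]; field_simp; rw [Real.sqrt_sq (Real.sqrt_nonneg _)]
  exact_mod_cast congrArg (fun t : ℝ => (t : ℂ)) this

lemma herm (x : Matrix (Fin 3) (Fin 3) ℂ) (hherm : x.conjTranspose * Jm = Jm * x)
    (u v : Fin 3 → ℂ) : Bf (x *ᵥ u) v = Bf u (x *ᵥ v) := by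
  rw [Bf_eq, Bf_eq, Matrix.star_mulVec, ← Matrix.dotProduct_mulVec,
    Matrix.mulVec_mulVec, hherm, ← Matrix.mulVec_mulVec]

lemma Bf_mulVec (A : Matrix (Fin 3) (Fin 3) ℂ) (u v : Fin 3 → ℂ) :
    Bf (A *ᵥ u) (A *ᵥ v) = star u ⬝ᵥ ((A.conjTranspose * Jm * A) *ᵥ v) := by
  rw [Bf_eq, Matrix.star_mulVec, ← Matrix.dotProduct_mulVec, Matrix.mulVec_mulVec,
    Matrix.mulVec_mulVec, Matrix.mul_assoc]

lemma gram_cols (c0 c1 c2 : Fin 3 → ℂ) :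
    (cols ![c0,c1,c2]).conjTranspose * Jm * cols ![c0,c1,c2] =
      !![Bf c0 c0, Bf c0 c1, Bf c0 c2;
         Bf c1 c0, Bf c1 c1, Bf c1 c2;
         Bf c2 c0, Bf c2 c1, Bf c2 c2] := by
  ext i j
  fin_cases i <;> fin_cases j <;>
    simp [cols, Bf, Matrix.mul_apply, Fin.sum_univ_three, Matrix.diagonal] <;> ring

lemma mul_cols_eq (x : Matrix (Fin 3) (Fin 3) ℂ) (c0 c1 c2 : Fin 3 → ℂ)
    (D : Matrix (Fin 3) (Fin 3) ℂ)
    (h0 : x *ᵥ c0 = D 0 0 • c0 + D 1 0 • c1 + D 2 0 • c2)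
    (h1 : x *ᵥ c1 = D 0 1 • c0 + D 1 1 • c1 + D 2 1 • c2)
    (h2 : x *ᵥ c2 = D 0 2 • c0 + D 1 2 • c1 + D 2 2 • c2) :
    x * cols ![c0,c1,c2] = cols ![c0,c1,c2] * D := by
  ext i j
  have e0 := congrFun h0 i
  have e1 := congrFun h1 i
  have e2 := congrFun h2 i
  simp [Matrix.mulVec, dotProduct, Fin.sum_univ_three] at e0 e1 e2
  fin_cases j <;>
    simp [cols, Matrix.mul_apply, Fin.sum_univ_three] <;>
    [rw [e0]; rw [e1]; rw [e2]] <;> ring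

lemma det_cols (c0 c1 c2 : Fin 3 → ℂ) :
    (cols ![c0,c1,c2]).det =
      c0 0 * (c1 1 * c2 2 - c2 1 * c1 2) - c1 0 * (c0 1 * c2 2 - c2 1 * c0 2)
        + c2 0 * (c0 1 * c1 2 - c1 1 * c0 2) := by
  rw [Matrix.det_fin_three]; simp [cols]; ring

lemma nondeg (c : Fin 3 → Fin 3 → ℂ) (hdet : (cols c).det ≠ 0) (v : Fin 3 → ℂ)
    (h : ∀ j, Bf v (c j) = 0) : v = 0 := by
  have hJJ : Jm * Jm = 1 := by
    rw [Matrix.diagonal_mul_diagonal]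
    ext i j; fin_cases i <;> fin_cases j <;> simp [Matrix.diagonal, Matrix.one_apply]
  have hr : (star v ᵥ* Jm) ᵥ* cols c = 0 := by
    funext j
    have := h j
    rw [Bf_eq, Matrix.dotProduct_mulVec] at this
    simpa [Matrix.vecMul, dotProduct, cols, Fin.sum_univ_three] using this
  have hu : IsUnit (cols c).det := isUnit_iff_ne_zero.mpr hdet
  have h1 : cols c * (cols c)⁻¹ = 1 := Matrix.mul_nonsing_inv _ hu
  have hr0 : star v ᵥ* Jm = 0 := by
    have := congrArg (fun w => w ᵥ* (cols c)⁻¹) hr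
    simpa [Matrix.vecMul_vecMul, Matrix.mul_assoc, h1, Matrix.zero_vecMul] using this
  have hsv : star v = 0 := by
    have := congrArg (fun w => w ᵥ* Jm) hr0
    simpa [Matrix.vecMul_vecMul, hJJ, Matrix.zero_vecMul] using this
  have := congrArg star hsv
  simpa using this

lemma finish (x g₀ D : Matrix (Fin 3) (Fin 3) ℂ)
    (hgram : g₀.conjTranspose * Jm * g₀ = Jm)
    (heig : x * g₀ = g₀ * D)
    (hcomm : ∀ w : ℂ, Matrix.diagonal ![w,1,1] * D = D * Matrix.diagonal ![w,1,1]) :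
    ∃ g : Matrix (Fin 3) (Fin 3) ℂ, g.det = 1 ∧ g.conjTranspose * Jm * g = Jm ∧
      g⁻¹ * x * g = D := by
  have hdetJ : Jm.det = -1 := by simp [Matrix.det_diagonal, Fin.prod_univ_three]
  have hz : (starRingEnd ℂ) g₀.det * g₀.det = 1 := by
    have h0 := congrArg Matrix.det hgram
    rw [Matrix.det_mul, Matrix.det_mul, Matrix.det_conjTranspose, hdetJ] at h0
    have h2 : star g₀.det * g₀.det = 1 := by linear_combination -h0
    simpa using h2
  set w : ℂ := (starRingEnd ℂ) g₀.det with hw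
  set g : Matrix (Fin 3) (Fin 3) ℂ := g₀ * Matrix.diagonal ![w,1,1] with hg
  have hdetd : (Matrix.diagonal ![w,1,1]).det = w := by
    simp [Matrix.det_diagonal, Fin.prod_univ_three]
  have hdetg : g.det = 1 := by
    rw [hg, Matrix.det_mul, hdetd, mul_comm]; exact hz
  refine ⟨g, hdetg, ?_, ?_⟩
  · rw [hg, Matrix.conjTranspose_mul]
    have hdc : (Matrix.diagonal ![w,1,1]).conjTranspose
        = Matrix.diagonal ![(starRingEnd ℂ) w, 1, 1] := by
      ext i j
      fin_cases i <;> fin_cases j <;> simp [Matrix.conjTranspose_apply, Matrix.diagonal]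
    calc (Matrix.diagonal ![w,1,1]).conjTranspose * g₀.conjTranspose * Jm *
          (g₀ * Matrix.diagonal ![w,1,1])
        = (Matrix.diagonal ![w,1,1]).conjTranspose * (g₀.conjTranspose * Jm * g₀) *
          Matrix.diagonal ![w,1,1] := by simp only [Matrix.mul_assoc]
      _ = Matrix.diagonal ![(starRingEnd ℂ) w, 1, 1] * Jm * Matrix.diagonal ![w,1,1] := by
          rw [hgram, hdc]
      _ = Jm := by
          rw [Matrix.diagonal_mul_diagonal, Matrix.diagonal_mul_diagonal]
          refine Matrix.diagonal_eq_diagonal_iff.mpr ?_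
          intro i; fin_cases i <;> simp
          rw [hw]
          have : (starRingEnd ℂ) ((starRingEnd ℂ) g₀.det) * (starRingEnd ℂ) g₀.det
              = (starRingEnd ℂ) g₀.det * g₀.det := by
            rw [Complex.conj_conj]; ring
          rw [this, hz]
  · have hgu : IsUnit g.det := by rw [hdetg]; exact isUnit_one
    have hxg : x * g = g * D := by
      rw [hg, ← Matrix.mul_assoc, heig, Matrix.mul_assoc, ← hcomm w, ← Matrix.mul_assoc]
    rw [Matrix.mul_assoc, hxg, ← Matrix.mul_assoc, Matrix.nonsing_inv_mul _ hgu, Matrix.one_mul]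

lemma nondeg_col (c : Fin 3 → Fin 3 → ℂ) (hdet : (cols c).det ≠ 0) (j : Fin 3)
    (h : ∀ k, Bf (c j) (c k) = 0) : False := by
  have hz := nondeg c hdet (c j) h
  apply hdet
  apply Matrix.det_eq_zero_of_column_eq_zero j
  intro i
  show c j i = 0
  rw [hz]; rfl

lemma caseA_core (x : Matrix (Fin 3) (Fin 3) ℂ) (q0 q1 q2 : Fin 3 → ℂ) (β0 β1 β2 : ℝ)
    (hsum : β0 + β1 + β2 = 0)
    (he0 : x *ᵥ q0 = (β0 : ℂ) • q0) (he1 : x *ᵥ q1 = (β1 : ℂ) • q1)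
    (he2 : x *ᵥ q2 = (β2 : ℂ) • q2)
    (h00 : Bf q0 q0 = 1) (h11 : Bf q1 q1 = 1) (h22 : Bf q2 q2 = -1)
    (h01 : Bf q0 q1 = 0) (h02 : Bf q0 q2 = 0) (h12 : Bf q1 q2 = 0) :
    Goal x := by
  have h10 : Bf q1 q0 = 0 := by rw [← Bf_conj, h01, map_zero]
  have h20 : Bf q2 q0 = 0 := by rw [← Bf_conj, h02, map_zero]
  have h21 : Bf q2 q1 = 0 := by rw [← Bf_conj, h12, map_zero]
  set D : Matrix (Fin 3) (Fin 3) ℂ := Matrix.diagonal ![(β0:ℂ), β1, β2] with hD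
  have hgram : (cols ![q0,q1,q2]).conjTranspose * Jm * cols ![q0,q1,q2] = Jm := by
    rw [gram_cols, h00, h11, h22, h01, h02, h12, h10, h20, h21]
    ext i j; fin_cases i <;> fin_cases j <;>
      simp [Matrix.diagonal, Matrix.vecHead, Matrix.vecTail]
  have heig : x * cols ![q0,q1,q2] = cols ![q0,q1,q2] * D := by
    apply mul_cols_eq <;> simp [hD, Matrix.diagonal, he0, he1, he2]
  have hcomm : ∀ w : ℂ, Matrix.diagonal ![w,1,1] * D = D * Matrix.diagonal ![w,1,1] := by
    intro w
    rw [hD, Matrix.diagonal_mul_diagonal, Matrix.diagonal_mul_diagonal]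
    refine Matrix.diagonal_eq_diagonal_iff.mpr ?_
    intro i; fin_cases i <;> simp <;> ring
  obtain ⟨g, hg1, hg2, hg3⟩ := finish x (cols ![q0,q1,q2]) D hgram heig hcomm
  refine ⟨g, hg1, hg2, Or.inl ⟨β0, β1, ?_⟩⟩
  rw [hg3, hD]
  have hβ : ((β2:ℝ):ℂ) = -(β0:ℂ) - β1 := by
    have : (β2:ℝ) = -β0 - β1 := by linarith
    rw [this]; push_cast; ring
  apply congrArg Matrix.diagonal
  funext i; fin_cases i <;> simp [hβ]

lemma caseA_signed (x : Matrix (Fin 3) (Fin 3) ℂ) (q0 q1 q2 : Fin 3 → ℂ) (β0 β1 β2 : ℝ)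
    (hsum : β0 + β1 + β2 = 0)
    (he0 : x *ᵥ q0 = (β0 : ℂ) • q0) (he1 : x *ᵥ q1 = (β1 : ℂ) • q1)
    (he2 : x *ᵥ q2 = (β2 : ℂ) • q2)
    (h01 : Bf q0 q1 = 0) (h02 : Bf q0 q2 = 0) (h12 : Bf q1 q2 = 0)
    (ν0 ν1 ν2 : ℝ) (hn0 : Bf q0 q0 = (ν0 : ℂ)) (hn1 : Bf q1 q1 = (ν1 : ℂ))
    (hn2 : Bf q2 q2 = (ν2 : ℂ))
    (hp0 : 0 < ν0) (hp1 : 0 < ν1) (hp2 : ν2 < 0) : Goal x := by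
  set s0 : ℂ := (((Real.sqrt ν0)⁻¹ : ℝ) : ℂ) with hs0
  set s1 : ℂ := (((Real.sqrt ν1)⁻¹ : ℝ) : ℂ) with hs1
  set s2 : ℂ := (((Real.sqrt (-ν2))⁻¹ : ℝ) : ℂ) with hs2
  refine caseA_core x (s0 • q0) (s1 • q1) (s2 • q2) β0 β1 β2 hsum
    (eig_smul x q0 _ _ he0) (eig_smul x q1 _ _ he1) (eig_smul x q2 _ _ he2)
    ?_ ?_ ?_ ?_ ?_ ?_
  · rw [Bf_smul_smul, hn0, hs0]; exact norm_scale_pos ν0 hp0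
  · rw [Bf_smul_smul, hn1, hs1]; exact norm_scale_pos ν1 hp1
  · rw [Bf_smul_smul, hn2, hs2]
    have h2 : (ν2 : ℂ) = -((-ν2 : ℝ) : ℂ) := by push_cast; ring
    rw [h2, mul_neg, norm_scale_pos (-ν2) (by linarith)]
  · rw [Bf_smul_smul, h01, mul_zero]
  · rw [Bf_smul_smul, h02, mul_zero]
  · rw [Bf_smul_smul, h12, mul_zero]

lemma caseA (x : Matrix (Fin 3) (Fin 3) ℂ) (q0 q1 q2 : Fin 3 → ℂ) (β0 β1 β2 : ℝ)
    (hsum : β0 + β1 + β2 = 0)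
    (he0 : x *ᵥ q0 = (β0 : ℂ) • q0) (he1 : x *ᵥ q1 = (β1 : ℂ) • q1)
    (he2 : x *ᵥ q2 = (β2 : ℂ) • q2)
    (h01 : Bf q0 q1 = 0) (h02 : Bf q0 q2 = 0) (h12 : Bf q1 q2 = 0)
    (hdet : (cols ![q0,q1,q2]).det ≠ 0) : Goal x := by
  have h10 : Bf q1 q0 = 0 := by rw [← Bf_conj, h01, map_zero]
  have h20 : Bf q2 q0 = 0 := by rw [← Bf_conj, h02, map_zero]
  have h21 : Bf q2 q1 = 0 := by rw [← Bf_conj, h12, map_zero]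
  set ν0 : ℝ := (Bf q0 q0).re with hν0
  set ν1 : ℝ := (Bf q1 q1).re with hν1
  set ν2 : ℝ := (Bf q2 q2).re with hν2
  have hn0 : Bf q0 q0 = (ν0 : ℂ) := Bf_self_real q0
  have hn1 : Bf q1 q1 = (ν1 : ℂ) := Bf_self_real q1
  have hn2 : Bf q2 q2 = (ν2 : ℂ) := Bf_self_real q2
  -- each ν is nonzero
  have hz0 : ν0 ≠ 0 := by
    intro h
    refine nondeg_col ![q0,q1,q2] hdet 0 ?_
    intro k
    fin_cases k
    · show Bf q0 q0 = 0; rw [hn0, h]; simp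
    · exact h01
    · exact h02
  have hz1 : ν1 ≠ 0 := by
    intro h
    refine nondeg_col ![q0,q1,q2] hdet 1 ?_
    intro k
    fin_cases k
    · exact h10
    · show Bf q1 q1 = 0; rw [hn1, h]; simp
    · exact h12
  have hz2 : ν2 ≠ 0 := by
    intro h
    refine nondeg_col ![q0,q1,q2] hdet 2 ?_
    intro k
    fin_cases k
    · exact h20
    · exact h21
    · show Bf q2 q2 = 0; rw [hn2, h]; simp
  -- total gram matrix
  have hG : (cols ![q0,q1,q2]).conjTranspose * Jm * cols ![q0,q1,q2]
      = Matrix.diagonal ![(ν0:ℂ), (ν1:ℂ), (ν2:ℂ)] := by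
    rw [gram_cols, hn0, hn1, hn2, h01, h02, h12, h10, h20, h21]
    ext i j
    fin_cases i <;> fin_cases j <;>
      simp [Matrix.diagonal, Matrix.vecHead, Matrix.vecTail]
  -- determinant identity gives ν0 ν1 ν2 < 0
  have hdetJ : Jm.det = -1 := by simp [Matrix.det_diagonal, Fin.prod_univ_three]
  have hΔ := congrArg Matrix.det hG
  rw [Matrix.det_mul, Matrix.det_mul, Matrix.det_conjTranspose, hdetJ,
    Matrix.det_diagonal, Fin.prod_univ_three] at hΔ
  simp only [Matrix.cons_val_zero, Matrix.cons_val_one, Matrix.head_cons,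
    Matrix.cons_val_two, Matrix.tail_cons, Complex.star_def] at hΔ
  set Δ : ℂ := (cols ![q0,q1,q2]).det with hΔdef
  have e1 : (starRingEnd ℂ) Δ * Δ = ((Complex.normSq Δ : ℝ) : ℂ) := by
    rw [mul_comm, Complex.mul_conj]
  have hcast : ((ν0*ν1*ν2 : ℝ) : ℂ) = -(((Complex.normSq Δ) : ℝ) : ℂ) := by
    push_cast
    rw [← e1]
    linear_combination -hΔ
  have hprod : ν0 * ν1 * ν2 = -Complex.normSq Δ := by exact_mod_cast hcast
  have hΔpos : 0 < Complex.normSq Δ := Complex.normSq_pos.mpr hdet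
  have hprodneg : ν0 * ν1 * ν2 < 0 := by rw [hprod]; linarith
  rcases hz0.lt_or_gt with hsg0 | hsg0 <;> rcases hz1.lt_or_gt with hsg1 | hsg1 <;>
    rcases hz2.lt_or_gt with hsg2 | hsg2
  · -- all negative : impossible by signature
    exfalso
    have hu : IsUnit (cols ![q0,q1,q2]).det := isUnit_iff_ne_zero.mpr hdet
    set cv : Fin 3 → ℂ := (cols ![q0,q1,q2])⁻¹ *ᵥ ![1,0,0] with hcv
    have hGc : (cols ![q0,q1,q2]) *ᵥ cv = ![1,0,0] := by
      rw [hcv, Matrix.mulVec_mulVec, Matrix.mul_nonsing_inv _ hu, Matrix.one_mulVec]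
    have hexp := Bf_mulVec (cols ![q0,q1,q2]) cv cv
    rw [hGc, hG] at hexp
    have hBee : Bf ![(1:ℂ),0,0] ![(1:ℂ),0,0] = 1 := by simp [Bf]
    have hRHS : star cv ⬝ᵥ (Matrix.diagonal ![(ν0:ℂ), (ν1:ℂ), (ν2:ℂ)] *ᵥ cv)
        = ((ν0 * Complex.normSq (cv 0) + ν1 * Complex.normSq (cv 1)
            + ν2 * Complex.normSq (cv 2) : ℝ) : ℂ) := by
      simp only [dotProduct, Matrix.mulVec, Fin.sum_univ_three, Pi.star_apply,
        Matrix.diagonal, Matrix.of_apply, Matrix.cons_val_zero, Matrix.cons_val_one,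
        Matrix.head_cons, Matrix.cons_val_two, Matrix.tail_cons]
      push_cast
      simp only [Complex.star_def]
      linear_combination (ν0:ℂ) * Complex.mul_conj (cv 0) + (ν1:ℂ) * Complex.mul_conj (cv 1)
        + (ν2:ℂ) * Complex.mul_conj (cv 2)
    rw [hBee, hRHS] at hexp
    have hre : (1:ℝ) = ν0 * Complex.normSq (cv 0) + ν1 * Complex.normSq (cv 1)
        + ν2 * Complex.normSq (cv 2) := by exact_mod_cast hexp
    nlinarith [Complex.normSq_nonneg (cv 0), Complex.normSq_nonneg (cv 1),
      Complex.normSq_nonneg (cv 2)]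
  · -- (-,-,+) : product positive, contradiction
    exact absurd hprodneg (by nlinarith [mul_pos (mul_pos (neg_pos.mpr hsg0) (neg_pos.mpr hsg1)) hsg2])
  · -- (-,+,-)
    exact absurd hprodneg (by nlinarith [mul_pos (mul_pos (neg_pos.mpr hsg0) hsg1) (neg_pos.mpr hsg2)])
  · -- (-,+,+) : use order q1 q2 q0
    exact caseA_signed x q1 q2 q0 β1 β2 β0 (by linarith) he1 he2 he0 h12 h10 h20
      ν1 ν2 ν0 hn1 hn2 hn0 hsg1 hsg2 hsg0
  · -- (+,-,-)
    exact absurd hprodneg (by nlinarith [mul_pos (mul_pos hsg0 (neg_pos.mpr hsg1)) (neg_pos.mpr hsg2)])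
  · -- (+,-,+) : order q2 q0 q1
    exact caseA_signed x q2 q0 q1 β2 β0 β1 (by linarith) he2 he0 he1 h20 h21 h01
      ν2 ν0 ν1 hn2 hn0 hn1 hsg2 hsg0 hsg1
  · -- (+,+,-)
    exact caseA_signed x q0 q1 q2 β0 β1 β2 hsum he0 he1 he2 h01 h02 h12
      ν0 ν1 ν2 hn0 hn1 hn2 hsg0 hsg1 hsg2
  · -- (+,+,+)
    exact absurd hprodneg (by nlinarith [mul_pos (mul_pos hsg0 hsg1) hsg2])


lemma Bf_comb (A B C D : ℂ) (pa pb : Fin 3 → ℂ) :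
    Bf (A • pa + B • pb) (C • pa + D • pb)
      = (starRingEnd ℂ) A * C * Bf pa pa + (starRingEnd ℂ) A * D * Bf pa pb
        + (starRingEnd ℂ) B * C * Bf pb pa + (starRingEnd ℂ) B * D * Bf pb pb := by
  simp [Bf]; ring

lemma Bf_comb_left (A B : ℂ) (pa pb v : Fin 3 → ℂ) :
    Bf (A • pa + B • pb) v = (starRingEnd ℂ) A * Bf pa v + (starRingEnd ℂ) B * Bf pb v := by
  simp [Bf]; ring

lemma eig_comb (x : Matrix (Fin 3) (Fin 3) ℂ) (pa pb : Fin 3 → ℂ) (β A B : ℂ)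
    (ha : x *ᵥ pa = β • pa) (hb : x *ᵥ pb = β • pb) :
    x *ᵥ (A • pa + B • pb) = β • (A • pa + B • pb) := by
  rw [Matrix.mulVec_add, eig_smul x pa β A ha, eig_smul x pb β B hb, smul_add]

lemma cols_comb (pa pb pc : Fin 3 → ℂ) (A B C D : ℂ) :
    cols ![A • pa + B • pb, C • pa + D • pb, pc]
      = cols ![pa,pb,pc] * !![A, C, 0; B, D, 0; 0, 0, 1] := by
  ext i j
  fin_cases j <;> simp [cols, Matrix.mul_apply, Fin.sum_univ_three] <;> try ring

lemma det_comb (A B C D : ℂ) :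
    (!![A, C, 0; B, D, 0; 0, 0, 1] : Matrix (Fin 3) (Fin 3) ℂ).det = A * D - C * B := by
  rw [Matrix.det_fin_three]; simp; try ring

lemma det_comb_ne (pa pb pc : Fin 3 → ℂ) (A B C D : ℂ)
    (hdet : (cols ![pa,pb,pc]).det ≠ 0) (hM : A * D - C * B ≠ 0) :
    (cols ![A • pa + B • pb, C • pa + D • pb, pc]).det ≠ 0 := by
  rw [cols_comb, Matrix.det_mul, det_comb]
  exact mul_ne_zero hdet hM

lemma caseA_double (x : Matrix (Fin 3) (Fin 3) ℂ) (pa pb pc : Fin 3 → ℂ) (β βc : ℝ)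
    (hsum : β + β + βc = 0)
    (hea : x *ᵥ pa = (β : ℂ) • pa) (heb : x *ᵥ pb = (β : ℂ) • pb)
    (hec : x *ᵥ pc = (βc : ℂ) • pc)
    (hac : Bf pa pc = 0) (hbc : Bf pb pc = 0)
    (hdet : (cols ![pa,pb,pc]).det ≠ 0) : Goal x := by
  by_cases haa : Bf pa pa ≠ 0
  · -- q1 = pa, q2 = (-Bf pa pb) • pa + (Bf pa pa) • pb
    have h1 : (1:ℂ) • pa + (0:ℂ) • pb = pa := by simp
    refine caseA x ((1:ℂ) • pa + (0:ℂ) • pb)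
      ((-Bf pa pb) • pa + (Bf pa pa) • pb) pc β β βc hsum
      (eig_comb x pa pb _ _ _ hea heb) (eig_comb x pa pb _ _ _ hea heb) hec
      ?_ ?_ ?_ ?_
    · rw [Bf_comb]
      simp only [_root_.map_one, map_zero, one_mul, zero_mul, mul_zero, add_zero, zero_add]
      try ring
    · rw [Bf_comb_left, hac, hbc]; simp
    · rw [Bf_comb_left, hac, hbc]; simp
    · exact det_comb_ne pa pb pc _ _ _ _ hdet (by simpa using haa)
  · push_neg at haa
    by_cases hbb : Bf pb pb ≠ 0
    · -- q1 = pb, q2 = (Bf pb pb) • pa + (-Bf pb pa) • pb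
      refine caseA x ((0:ℂ) • pa + (1:ℂ) • pb)
        ((Bf pb pb) • pa + (-Bf pb pa) • pb) pc β β βc hsum
        (eig_comb x pa pb _ _ _ hea heb) (eig_comb x pa pb _ _ _ hea heb) hec
        ?_ ?_ ?_ ?_
      · rw [Bf_comb]
        simp only [_root_.map_one, map_zero, one_mul, zero_mul, mul_zero, add_zero, zero_add]
        try ring
      · rw [Bf_comb_left, hac, hbc]; simp
      · rw [Bf_comb_left, hac, hbc]; simp
      · refine det_comb_ne pa pb pc _ _ _ _ hdet ?_
        simpa using hbb
    · push_neg at hbb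
      -- both isotropic; the pairing c := Bf pa pb is nonzero
      set c : ℂ := Bf pa pb with hc
      have hcne : c ≠ 0 := by
        intro h0
        refine nondeg_col ![pa,pb,pc] hdet 0 ?_
        intro k
        fin_cases k
        · exact haa
        · show Bf pa pb = 0; rw [← hc]; exact h0
        · exact hac
      have hba : Bf pb pa = (starRingEnd ℂ) c := by rw [← Bf_conj, ← hc]
      refine caseA x ((1:ℂ) • pa + ((starRingEnd ℂ) c) • pb)
        ((-c) • pa + ((starRingEnd ℂ) c * c) • pb) pc β β βc hsum
        (eig_comb x pa pb _ _ _ hea heb) (eig_comb x pa pb _ _ _ hea heb) hec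
        ?_ ?_ ?_ ?_
      · rw [Bf_comb, haa, hbb, hba, ← hc]
        simp only [Complex.conj_conj, mul_zero, zero_mul, add_zero, zero_add, _root_.map_one,
          one_mul]
        try ring
      · rw [Bf_comb_left, hac, hbc]; simp
      · rw [Bf_comb_left, hac, hbc]; simp
      · refine det_comb_ne pa pb pc _ _ _ _ hdet ?_
        have : (1:ℂ) * ((starRingEnd ℂ) c * c) - (-c) * (starRingEnd ℂ) c
            = 2 * ((starRingEnd ℂ) c * c) := by ring
        rw [this]
        have : (starRingEnd ℂ) c * c ≠ 0 := mul_ne_zero (by simpa using hcne) hcne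
        simpa using this


lemma orth_gen (x : Matrix (Fin 3) (Fin 3) ℂ)
    (hB : ∀ y z, Bf (x *ᵥ y) z = Bf y (x *ᵥ z)) (y z : Fin 3 → ℂ) (lam mu : ℂ)
    (hy : x *ᵥ y = lam • y) (hz : x *ᵥ z = mu • z)
    (hne : (starRingEnd ℂ) lam ≠ mu) : Bf y z = 0 := by
  have h := hB y z
  rw [hy, hz, Bf_smul_left, Bf_smul_right] at h
  have h2 : ((starRingEnd ℂ) lam - mu) * Bf y z = 0 := by linear_combination h
  rcases mul_eq_zero.mp h2 with h3 | h3
  · exact absurd (by linear_combination h3) hne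
  · exact h3

lemma caseB (x : Matrix (Fin 3) (Fin 3) ℂ) (u v w : Fin 3 → ℂ) (l1 l2 l3 : ℂ)
    (him : l1.im ≠ 0) (hconj : l2 = (starRingEnd ℂ) l1) (hsum : l1 + l2 + l3 = 0)
    (heu : x *ᵥ u = l3 • u) (hev : x *ᵥ v = l1 • v) (hew : x *ᵥ w = l2 • w)
    (hB : ∀ y z, Bf (x *ᵥ y) z = Bf y (x *ᵥ z))
    (hdet : (cols ![u,v,w]).det ≠ 0) : Goal x := by
  set a : ℝ := l1.re with ha
  set b : ℝ := l1.im with hb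
  have hl1 : l1 = (a : ℂ) + (b : ℂ) * Complex.I := (Complex.re_add_im l1).symm
  have hl2 : l2 = (a : ℂ) - (b : ℂ) * Complex.I := by
    rw [hconj, hl1]
    simp [map_add, Complex.conj_ofReal, Complex.conj_I]
    ring
  have hl3 : l3 = ((-2 * a : ℝ) : ℂ) := by
    have h1 : l3 = -(l1 + l2) := by linear_combination hsum
    rw [h1, hl1, hl2]; push_cast; ring
  have hl3c : (starRingEnd ℂ) l3 = l3 := by rw [hl3, Complex.conj_ofReal]
  have hl1c : (starRingEnd ℂ) l1 ≠ l1 := fun h => him (Complex.conj_eq_iff_im.mp h)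
  have hl2im : l2.im = -b := by rw [hl2]; simp
  have hl3im : l3.im = 0 := by rw [hl3]; simp
  -- orthogonality relations
  have hvv : Bf v v = 0 := orth_gen x hB v v l1 l1 hev hev hl1c
  have hww : Bf w w = 0 := by
    refine orth_gen x hB w w l2 l2 hew hew ?_
    rw [hconj, Complex.conj_conj]
    intro h
    exact him (Complex.conj_eq_iff_im.mp h.symm)
  have huv : Bf u v = 0 := by
    refine orth_gen x hB u v l3 l1 heu hev ?_
    rw [hl3c]
    intro h
    apply him
    have h2 := congrArg Complex.im h
    rw [hl3im] at h2
    exact h2.symm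
  have huw : Bf u w = 0 := by
    refine orth_gen x hB u w l3 l2 heu hew ?_
    rw [hl3c]
    intro h
    apply him
    have := congrArg Complex.im h
    rw [hl3im, hl2im] at this
    linarith
  have hvu : Bf v u = 0 := by rw [← Bf_conj, huv, map_zero]
  have hwu : Bf w u = 0 := by rw [← Bf_conj, huw, map_zero]
  set c : ℂ := Bf v w with hc
  have hcne : c ≠ 0 := by
    intro h0
    refine nondeg_col ![u,v,w] hdet 1 ?_
    intro k
    fin_cases k
    · exact hvu
    · exact hvv
    · show Bf v w = 0; rw [← hc]; exact h0
  have hwv : Bf w v = (starRingEnd ℂ) c := by rw [← Bf_conj, ← hc]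
  set n : ℝ := (Bf u u).re with hn
  have huu : Bf u u = (n : ℂ) := Bf_self_real u
  -- gram matrix and positivity of n
  have hG : (cols ![u,v,w]).conjTranspose * Jm * cols ![u,v,w]
      = !![(n:ℂ), 0, 0; 0, 0, c; 0, (starRingEnd ℂ) c, 0] := by
    rw [gram_cols, huu, huv, huw, hvu, hvv, hwu, hwv, hww]
  have hdetJ : Jm.det = -1 := by simp [Matrix.det_diagonal, Fin.prod_univ_three]
  have hdetR : (!![(n:ℂ), 0, 0; 0, 0, c; 0, (starRingEnd ℂ) c, 0]).det
      = -((n:ℂ) * (c * (starRingEnd ℂ) c)) := by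
    rw [Matrix.det_fin_three]
    simp
    try ring
  have hΔ := congrArg Matrix.det hG
  rw [Matrix.det_mul, Matrix.det_mul, Matrix.det_conjTranspose, hdetJ, hdetR] at hΔ
  simp only [Complex.star_def] at hΔ
  set Δ : ℂ := (cols ![u,v,w]).det with hΔdef
  have e1 : Δ * (starRingEnd ℂ) Δ = ((Complex.normSq Δ : ℝ) : ℂ) := Complex.mul_conj Δ
  have e2 : c * (starRingEnd ℂ) c = ((Complex.normSq c : ℝ) : ℂ) := Complex.mul_conj c
  have hcast : ((n * Complex.normSq c : ℝ) : ℂ) = ((Complex.normSq Δ : ℝ) : ℂ) := by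
    push_cast
    linear_combination hΔ - (n:ℂ) * e2 + e1
  have hreal : n * Complex.normSq c = Complex.normSq Δ := by exact_mod_cast hcast
  have hnpos : 0 < n := by
    nlinarith [Complex.normSq_pos.mpr hcne, Complex.normSq_pos.mpr hdet]
  -- normalized vectors
  set su : ℂ := (((Real.sqrt n)⁻¹ : ℝ) : ℂ) with hsu
  set r : ℂ := (((Real.sqrt 2)⁻¹ : ℝ) : ℂ) with hr
  set u' : Fin 3 → ℂ := su • u with hu'
  set w' : Fin 3 → ℂ := c⁻¹ • w with hw'
  set e2 : Fin 3 → ℂ := r • (v + w') with he2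
  set e3 : Fin 3 → ℂ := r • (v - w') with he3
  have hvw' : Bf v w' = 1 := by rw [hw', Bf_smul_right, ← hc, inv_mul_cancel₀ hcne]
  have hw'v : Bf w' v = 1 := by
    rw [← Bf_conj, hvw', _root_.map_one]
  have hw'w' : Bf w' w' = 0 := by rw [hw', Bf_smul_smul, hww, mul_zero]
  have huw' : Bf u w' = 0 := by rw [hw', Bf_smul_right, huw, mul_zero]
  have hw'u : Bf w' u = 0 := by rw [← Bf_conj, huw', map_zero]
  -- gram entries of new basis
  have g00 : Bf u' u' = 1 := by
    rw [hu', Bf_smul_smul, huu, hsu]; exact norm_scale_pos n hnpos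
  have g01 : Bf u' e2 = 0 := by
    rw [hu', he2, Bf_smul_smul, Bf_add_right, huv, huw']; ring
  have g02 : Bf u' e3 = 0 := by
    rw [hu', he3, Bf_smul_smul, Bf_sub_right, huv, huw']; ring
  have g10 : Bf e2 u' = 0 := by rw [← Bf_conj, g01, map_zero]
  have g20 : Bf e3 u' = 0 := by rw [← Bf_conj, g02, map_zero]
  have hrr : (starRingEnd ℂ) r * r * 2 = 1 := by
    rw [hr]; exact norm_scale_pos 2 two_pos
  have g11 : Bf e2 e2 = 1 := by
    rw [he2, Bf_smul_smul, Bf_add_right, Bf_add_left, Bf_add_left, hvv, hvw', hw'v, hw'w']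
    linear_combination hrr
  have g22 : Bf e3 e3 = -1 := by
    rw [he3, Bf_smul_smul, Bf_sub_right, Bf_sub_left, Bf_sub_left, hvv, hvw', hw'v, hw'w']
    linear_combination (-1 : ℂ) * hrr
  have g12 : Bf e2 e3 = 0 := by
    rw [he2, he3, Bf_smul_smul, Bf_sub_right, Bf_add_left, Bf_add_left, hvv, hvw', hw'v, hw'w']
    ring
  have g21 : Bf e3 e2 = 0 := by rw [← Bf_conj, g12, map_zero]
  -- eigen relations
  have hew' : x *ᵥ w' = l2 • w' := eig_smul x w l2 c⁻¹ hew
  have heu' : x *ᵥ u' = l3 • u' := eig_smul x u l3 su heu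
  have hxe2 : x *ᵥ e2 = (a : ℂ) • e2 + ((b : ℂ) * Complex.I) • e3 := by
    rw [he2, Matrix.mulVec_smul, Matrix.mulVec_add, hev, hew']
    funext i
    simp only [Pi.smul_apply, Pi.add_apply, Pi.sub_apply, smul_eq_mul, he3]
    rw [hl1, hl2]
    ring
  have hxe3 : x *ᵥ e3 = ((b : ℂ) * Complex.I) • e2 + (a : ℂ) • e3 := by
    rw [he3, Matrix.mulVec_smul, Matrix.mulVec_sub, hev, hew']
    funext i
    simp only [Pi.smul_apply, Pi.add_apply, Pi.sub_apply, smul_eq_mul, he2]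
    rw [hl1, hl2]
    ring
  -- assemble
  set D' : Matrix (Fin 3) (Fin 3) ℂ :=
    !![2 * ((-a : ℝ) : ℂ), 0, 0;
       0, -((-a : ℝ) : ℂ), ((b : ℝ) : ℂ) * Complex.I;
       0, ((b : ℝ) : ℂ) * Complex.I, -((-a : ℝ) : ℂ)] with hD'
  have hgram : (cols ![u',e2,e3]).conjTranspose * Jm * cols ![u',e2,e3] = Jm := by
    rw [gram_cols, g00, g01, g02, g10, g11, g12, g20, g21, g22]
    ext i j
    fin_cases i <;> fin_cases j <;> rfl
  have heig : x * cols ![u',e2,e3] = cols ![u',e2,e3] * D' := by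
    apply mul_cols_eq
    · show x *ᵥ u' = (2 * ((-a : ℝ) : ℂ)) • u' + (0:ℂ) • e2 + (0:ℂ) • e3
      rw [heu', hl3]
      funext i
      simp only [Pi.smul_apply, Pi.add_apply, smul_eq_mul, Pi.zero_apply]
      push_cast
      ring
    · show x *ᵥ e2 = (0:ℂ) • u' + (-((-a : ℝ) : ℂ)) • e2 + (((b : ℝ) : ℂ) * Complex.I) • e3
      rw [hxe2]
      funext i
      simp only [Pi.smul_apply, Pi.add_apply, smul_eq_mul, Pi.zero_apply]
      push_cast
      ring
    · show x *ᵥ e3 = (0:ℂ) • u' + (((b : ℝ) : ℂ) * Complex.I) • e2 + (-((-a : ℝ) : ℂ)) • e3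
      rw [hxe3]
      funext i
      simp only [Pi.smul_apply, Pi.add_apply, smul_eq_mul, Pi.zero_apply]
      push_cast
      ring
  have hcomm : ∀ z : ℂ, Matrix.diagonal ![z,1,1] * D' = D' * Matrix.diagonal ![z,1,1] := by
    intro z
    ext i j
    fin_cases i <;> fin_cases j <;>
      simp [hD', Matrix.mul_apply, Matrix.diagonal, Fin.sum_univ_three, Matrix.vecHead,
        Matrix.vecTail] <;> try ring
  obtain ⟨g, hg1, hg2, hg3⟩ := finish x (cols ![u',e2,e3]) D' hgram heig hcomm
  exact ⟨g, hg1, hg2, Or.inr ⟨-a, b, by rw [hg3, hD']⟩⟩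



lemma main (x : Matrix (Fin 3) (Fin 3) ℂ)
    (hherm : x.conjTranspose * Jm = Jm * x)
    (htr : x.trace = 0)
    (hne : x ≠ 0)
    (hss : ∃ P : Matrix (Fin 3) (Fin 3) ℂ, IsUnit P.det ∧ (P⁻¹ * x * P).IsDiag) :
    Goal x := by
  obtain ⟨P, hPu, hPd⟩ := hss
  have hPP : P * P⁻¹ = 1 := Matrix.mul_nonsing_inv P hPu
  have hP'P : P⁻¹ * P = 1 := Matrix.nonsing_inv_mul P hPu
  set d : Fin 3 → ℂ := (P⁻¹ * x * P).diag with hd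
  have hdiagD : Matrix.diagonal d = P⁻¹ * x * P := hPd.diagonal_diag
  have hxP2 : x * P = P * Matrix.diagonal d := by
    rw [hdiagD, ← Matrix.mul_assoc, ← Matrix.mul_assoc, hPP, Matrix.one_mul]
  set p : Fin 3 → Fin 3 → ℂ := fun j i => P i j with hp
  -- eigenvector equations
  have heig : ∀ j, x *ᵥ (p j) = d j • (p j) := by
    intro j
    funext i
    have h1 : (x * P) i j = (P * Matrix.diagonal d) i j := by rw [hxP2]
    rw [Matrix.mul_apply, Matrix.mul_diagonal] at h1
    show (∑ k, x i k * p j k) = d j • p j i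
    simp only [hp, smul_eq_mul]
    rw [h1]; ring
  -- trace
  have htrd : d 0 + d 1 + d 2 = 0 := by
    have h1 : (P⁻¹ * x * P).trace = x.trace := by
      rw [Matrix.trace_mul_comm, ← Matrix.mul_assoc, hPP, Matrix.one_mul]
    rw [Matrix.trace_fin_three] at h1
    rw [htr] at h1
    exact h1
  have hB : ∀ u v, Bf (x *ᵥ u) v = Bf u (x *ᵥ v) := herm x hherm
  have hcolsP : cols ![p 0, p 1, p 2] = P := by
    have h1 : ![p 0, p 1, p 2] = p := by
      funext j; fin_cases j <;> rfl
    rw [h1]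
    ext i j; rfl
  have hdetP : (cols ![p 0, p 1, p 2]).det ≠ 0 := by
    rw [hcolsP]; exact hPu.ne_zero
  have orth : ∀ i j, (starRingEnd ℂ) (d i) ≠ d j → Bf (p i) (p j) = 0 := fun i j h =>
    orth_gen x hB (p i) (p j) (d i) (d j) (heig i) (heig j) h
  have stab : ∀ i, ∃ j, (starRingEnd ℂ) (d i) = d j := by
    intro i
    by_contra hno
    push_neg at hno
    refine nondeg_col ![p 0, p 1, p 2] hdetP i ?_
    intro k
    have hk : Bf (p i) (p k) = 0 := orth i k (hno k)
    fin_cases i <;> fin_cases k <;> exact hk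
  by_cases hreal : ∀ i, (d i).im = 0
  · -- all eigenvalues real
    have hdi : ∀ i, d i = ((d i).re : ℂ) := fun i => Complex.ext (by simp) (by simp [hreal i])
    have hconjd : ∀ i, (starRingEnd ℂ) (d i) = d i := fun i =>
      Complex.conj_eq_iff_im.mpr (hreal i)
    have heig' : ∀ i, x *ᵥ p i = (((d i).re : ℝ) : ℂ) • p i := by
      intro i
      rw [heig i, ← hdi i]
    have hsum : (d 0).re + (d 1).re + (d 2).re = 0 := by
      have := congrArg Complex.re htrd
      simpa using this
    by_cases h01 : d 0 = d 1
    · by_cases h02 : d 0 = d 2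
      · -- all eigenvalues equal : x = 0, contradiction
        exfalso
        rw [← h01, ← h02] at htrd
        have hd0 : d 0 = 0 := by linear_combination htrd / 3
        have hd1 : d 1 = 0 := by rw [← h01]; exact hd0
        have hd2 : d 2 = 0 := by rw [← h02]; exact hd0
        have hD0 : Matrix.diagonal d = 0 := by
          ext i j
          fin_cases i <;> fin_cases j <;> simp [Matrix.diagonal, hd0, hd1, hd2]
        apply hne
        have hx0 : x * P = 0 := by rw [hxP2, hD0, Matrix.mul_zero]
        calc x = x * (P * P⁻¹) := by rw [hPP, Matrix.mul_one]
          _ = (x * P) * P⁻¹ := by rw [Matrix.mul_assoc]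
          _ = 0 := by rw [hx0, Matrix.zero_mul]
      · -- d 0 = d 1 ≠ d 2
        refine caseA_double x (p 0) (p 1) (p 2) ((d 0).re) ((d 2).re) ?_
          (heig' 0) ?_ (heig' 2) ?_ ?_ hdetP
        · have h1 : (d 1).re = (d 0).re := by rw [← h01]
          linarith [hsum, h1]
        · rw [heig 1, ← h01, ← hdi 0]
        · exact orth 0 2 (by rw [hconjd 0]; exact h02)
        · refine orth 1 2 ?_
          rw [hconjd 1, ← h01]
          exact h02
    · by_cases h02 : d 0 = d 2
      · -- d 0 = d 2 ≠ d 1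
        refine caseA_double x (p 0) (p 2) (p 1) ((d 0).re) ((d 1).re) ?_
          (heig' 0) ?_ (heig' 1) ?_ ?_ ?_
        · have h1 : (d 2).re = (d 0).re := by rw [← h02]
          linarith [hsum, h1]
        · rw [heig 2, ← h02, ← hdi 0]
        · exact orth 0 1 (by rw [hconjd 0]; exact h01)
        · refine orth 2 1 ?_
          rw [hconjd 2, ← h02]
          exact h01
        · have hswap : (cols ![p 0, p 2, p 1]).det = -(cols ![p 0, p 1, p 2]).det := by
            rw [det_cols, det_cols]; ring
          rw [hswap]
          simpa using hdetP
      · by_cases h12 : d 1 = d 2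
        · -- d 1 = d 2 ≠ d 0
          refine caseA_double x (p 1) (p 2) (p 0) ((d 1).re) ((d 0).re) ?_
            (heig' 1) ?_ (heig' 0) ?_ ?_ ?_
          · have h1 : (d 2).re = (d 1).re := by rw [← h12]
            linarith [hsum, h1]
          · rw [heig 2, ← h12, ← hdi 1]
          · refine orth 1 0 ?_
            rw [hconjd 1]
            intro h; exact h01 h.symm
          · refine orth 2 0 ?_
            rw [hconjd 2, ← h12]
            intro h; exact h01 h.symm
          · have hcyc : (cols ![p 1, p 2, p 0]).det = (cols ![p 0, p 1, p 2]).det := by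
              rw [det_cols, det_cols]; ring
            rw [hcyc]; exact hdetP
        · -- all eigenvalues distinct
          refine caseA x (p 0) (p 1) (p 2) ((d 0).re) ((d 1).re) ((d 2).re) hsum
            (heig' 0) (heig' 1) (heig' 2) ?_ ?_ ?_ hdetP
          · exact orth 0 1 (by rw [hconjd 0]; exact h01)
          · exact orth 0 2 (by rw [hconjd 0]; exact h02)
          · exact orth 1 2 (by rw [hconjd 1]; exact h12)
  · -- some eigenvalue is not real
    push_neg at hreal
    obtain ⟨i, him⟩ := hreal
    obtain ⟨j, hj⟩ := stab i
    have hij : i ≠ j := by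
      intro h
      rw [← h] at hj
      exact him (Complex.conj_eq_iff_im.mp hj)
    fin_cases i <;> fin_cases j <;> simp only [Fin.isValue] at him hj hij ⊢
    · exact absurd rfl hij
    · -- i = 0, j = 1, k = 2
      refine caseB x (p 2) (p 0) (p 1) (d 0) (d 1) (d 2) him hj.symm
        (by linear_combination htrd) (heig 2) (heig 0) (heig 1) hB ?_
      have hcyc : (cols ![p 2, p 0, p 1]).det = (cols ![p 0, p 1, p 2]).det := by
        rw [det_cols, det_cols]; ring
      rw [hcyc]; exact hdetP
    · -- i = 0, j = 2, k = 1
      refine caseB x (p 1) (p 0) (p 2) (d 0) (d 2) (d 1) him hj.symm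
        (by linear_combination htrd) (heig 1) (heig 0) (heig 2) hB ?_
      have hsw : (cols ![p 1, p 0, p 2]).det = -(cols ![p 0, p 1, p 2]).det := by
        rw [det_cols, det_cols]; ring
      rw [hsw]
      simpa using hdetP
    · -- i = 1, j = 0, k = 2
      refine caseB x (p 2) (p 1) (p 0) (d 1) (d 0) (d 2) him hj.symm
        (by linear_combination htrd) (heig 2) (heig 1) (heig 0) hB ?_
      have hsw : (cols ![p 2, p 1, p 0]).det = -(cols ![p 0, p 1, p 2]).det := by
        rw [det_cols, det_cols]; ring
      rw [hsw]
      simpa using hdetP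
    · exact absurd rfl hij
    · -- i = 1, j = 2, k = 0
      refine caseB x (p 0) (p 1) (p 2) (d 1) (d 2) (d 0) him hj.symm
        (by linear_combination htrd) (heig 0) (heig 1) (heig 2) hB hdetP
    · -- i = 2, j = 0, k = 1
      refine caseB x (p 1) (p 2) (p 0) (d 2) (d 0) (d 1) him hj.symm
        (by linear_combination htrd) (heig 1) (heig 2) (heig 0) hB ?_
      have hcyc : (cols ![p 1, p 2, p 0]).det = (cols ![p 0, p 1, p 2]).det := by
        rw [det_cols, det_cols]; ring
      rw [hcyc]; exact hdetP
    · -- i = 2, j = 1, k = 0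
      refine caseB x (p 0) (p 2) (p 1) (d 2) (d 1) (d 0) him hj.symm
        (by linear_combination htrd) (heig 0) (heig 2) (heig 1) hB ?_
      have hsw : (cols ![p 0, p 2, p 1]).det = -(cols ![p 0, p 1, p 2]).det := by
        rw [det_cols, det_cols]; ring
      rw [hsw]
      simpa using hdetP
    · exact absurd rfl hij

end Stmt10Aux

end

/-- Every nonzero semisimple element of `i·𝔰𝔲(2,1)` (trace-free `J`-Hermitian
matrices, `J = diag(1,1,−1)`) is `SU(2,1)`-conjugate to a real diagonal matrix
`diag(α₁, α₂, −α₁−α₂)` or to `[[2α,0,0],[0,−α,γi],[0,γi,−α]]` with `α, γ ∈ ℝ`. -/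
theorem stmt10 (J : Matrix (Fin 3) (Fin 3) ℂ) (hJ : J = Matrix.diagonal ![1, 1, -1])
    (x : Matrix (Fin 3) (Fin 3) ℂ)
    (hherm : x.conjTranspose * J = J * x)
    (htr : x.trace = 0)
    (hne : x ≠ 0)
    -- `x` is semisimple, i.e. diagonalizable over `ℂ`
    (hss : ∃ P : Matrix (Fin 3) (Fin 3) ℂ, IsUnit P.det ∧ (P⁻¹ * x * P).IsDiag) :
    ∃ g : Matrix (Fin 3) (Fin 3) ℂ, g.det = 1 ∧ g.conjTranspose * J * g = J ∧
      ((∃ α₁ α₂ : ℝ, g⁻¹ * x * g = Matrix.diagonal ![(α₁ : ℂ), (α₂ : ℂ), (-α₁ - α₂ : ℂ)]) ∨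
        (∃ α γ : ℝ, g⁻¹ * x * g =
          !![(2 * α : ℂ), 0, 0;
             0, (-α : ℂ), (γ : ℂ) * Complex.I;
             0, (γ : ℂ) * Complex.I, (-α : ℂ)])) := by
  subst hJ
  exact Stmt10Aux.main x hherm htr hne hss
end
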